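/- Let F : ℝ → ℝ be twice differentiable with F'' not identically zero, let A : ℝ → ℝ be differentiable, and let α, β : ℝ → ℝ be twice differentiable and σ : ℝ → ℝ be differentiable. Suppose that for all x, y ∈ ℝ: −3F(y)α(x) + 3y·(α(x)A'(x) + A(x)α'(x) + α''(x)) − β(x)A'(x) − A(x)β'(x) + 2σ'(x) − β''(x) = 0. Then α(x) = 0 for all x ∈ ℝ. -/

import Mathlib

/-- If `F'' ≢ 0` and the first reduced determining equation
`-3F(y)α(x) + 3y(αA' + Aα' + α'') - βA' - Aβ' + 2σ' - β'' = 0` holds for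
all `x, y`, then `α ≡ 0`. -/
theorem stmt9 (F A α β σ : ℝ → ℝ)
    (hF : Differentiable ℝ F) (hF' : Differentiable ℝ (deriv F))
    (hFnz : ∃ y : ℝ, deriv (deriv F) y ≠ 0)
    (hA : Differentiable ℝ A)
    (hα : Differentiable ℝ α) (hα' : Differentiable ℝ (deriv α))
    (hβ : Differentiable ℝ β) (hβ' : Differentiable ℝ (deriv β))
    (hσ : Differentiable ℝ σ)
    (heq : ∀ x y : ℝ,
      -3 * F y * α x
        + 3 * y * (α x * deriv A x + A x * deriv α x + deriv (deriv α) x)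
        - β x * deriv A x - A x * deriv β x + 2 * deriv σ x - deriv (deriv β) x = 0) :
    ∀ x : ℝ, α x = 0 := by
  intro x
  by_contra hne
  set c := α x * deriv A x + A x * deriv α x + deriv (deriv α) x with hc
  set d := - β x * deriv A x - A x * deriv β x + 2 * deriv σ x - deriv (deriv β) x with hd
  have hFaff : F = fun y => (c / α x) * y + d / (3 * α x) := by
    funext y
    have h := heq x y
    have h3 : (3 : ℝ) * α x ≠ 0 := by positivity
    have h' : -3 * F y * α x + 3 * y * c + d = 0 := by rw [hc, hd]; linarith [h]
    field_simp
    linear_combination (-1) * h'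
  have hderiv : deriv F = fun _ : ℝ => c / α x := by
    rw [hFaff]
    funext y
    simp [deriv_add, mul_comm]
  have : deriv (deriv F) = fun _ : ℝ => 0 := by
    rw [hderiv]; funext y; simp
  obtain ⟨y, hy⟩ := hFnz
  rw [this] at hy
  exact hy rfl
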